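/- Let a, b, c, γ, M be real numbers with a − b·γ ≠ 0 and b − c·γ ≠ 0, set Υ := (a − b·γ)/(b − c·γ), and let s, r : ℝ → ℝ be differentiable. Define v : ℝ² → ℝ by v(θ, ψ) := (M·s(θ − Υ·ψ)/(a − b·γ))·(cos θ − cos(θ − Υ·ψ)) + r(θ − Υ·ψ). Then v is differentiable and satisfies (a − b·γ)·∂v/∂θ(θ, ψ) + (b − c·γ)·∂v/∂ψ(θ, ψ) = −M·s(θ − Υ·ψ)·sin θ for all (θ, ψ) ∈ ℝ². Moreover v(θ, 0) = r(θ) for all θ. -/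

import Mathlib

open ContinuousLinearMap in
theorem potential_equation_solution_inertia_wheel (a b c γ M : ℝ)
    (habg : a - b * γ ≠ 0) (hbc : b - c * γ ≠ 0)
    (s r : ℝ → ℝ) (hs : Differentiable ℝ s) (hr : Differentiable ℝ r) :
    Differentiable ℝ (fun p : ℝ × ℝ =>
        (M * s (p.1 - ((a - b * γ) / (b - c * γ)) * p.2) / (a - b * γ)) *
            (Real.cos p.1 - Real.cos (p.1 - ((a - b * γ) / (b - c * γ)) * p.2)) +
          r (p.1 - ((a - b * γ) / (b - c * γ)) * p.2)) ∧
    (∀ θ ψ : ℝ,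
      (a - b * γ) *
          fderiv ℝ (fun p : ℝ × ℝ =>
            (M * s (p.1 - ((a - b * γ) / (b - c * γ)) * p.2) / (a - b * γ)) *
                (Real.cos p.1 - Real.cos (p.1 - ((a - b * γ) / (b - c * γ)) * p.2)) +
              r (p.1 - ((a - b * γ) / (b - c * γ)) * p.2)) (θ, ψ) (1, 0) +
        (b - c * γ) *
          fderiv ℝ (fun p : ℝ × ℝ =>
            (M * s (p.1 - ((a - b * γ) / (b - c * γ)) * p.2) / (a - b * γ)) *
                (Real.cos p.1 - Real.cos (p.1 - ((a - b * γ) / (b - c * γ)) * p.2)) +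
              r (p.1 - ((a - b * γ) / (b - c * γ)) * p.2)) (θ, ψ) (0, 1)
        = -(M * s (θ - ((a - b * γ) / (b - c * γ)) * ψ) * Real.sin θ)) ∧
    (∀ θ : ℝ,
      (M * s (θ - ((a - b * γ) / (b - c * γ)) * 0) / (a - b * γ)) *
          (Real.cos θ - Real.cos (θ - ((a - b * γ) / (b - c * γ)) * 0)) +
        r (θ - ((a - b * γ) / (b - c * γ)) * 0) = r θ) := by
  set Υ := (a - b * γ) / (b - c * γ) with hΥ
  set Lu : ℝ × ℝ →L[ℝ] ℝ :=
    ContinuousLinearMap.fst ℝ ℝ ℝ - Υ • ContinuousLinearMap.snd ℝ ℝ ℝ with hLu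
  have hu : ∀ p : ℝ × ℝ, HasFDerivAt (fun q : ℝ × ℝ => q.1 - Υ * q.2) Lu p := by
    intro p
    exact hasFDerivAt_fst.sub ((hasFDerivAt_snd (𝕜 := ℝ) (E := ℝ) (F := ℝ)).const_mul Υ)
  refine ⟨?_, ?_, ?_⟩
  · fun_prop
  · intro θ ψ
    have hsu : HasFDerivAt (fun q : ℝ × ℝ => s (q.1 - Υ * q.2))
        (deriv s (θ - Υ * ψ) • Lu) (θ, ψ) :=
      ((hs _).hasDerivAt).comp_hasFDerivAt (θ, ψ) (hu (θ, ψ))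
    have hA : HasFDerivAt (fun q : ℝ × ℝ => M * s (q.1 - Υ * q.2) / (a - b * γ))
        ((a - b * γ)⁻¹ • (M • (deriv s (θ - Υ * ψ) • Lu))) (θ, ψ) := by
      simpa [div_eq_mul_inv] using (hsu.const_mul M).mul_const (a - b * γ)⁻¹
    have hcos1 : HasFDerivAt (fun q : ℝ × ℝ => Real.cos q.1)
        (-Real.sin θ • ContinuousLinearMap.fst ℝ ℝ ℝ) (θ, ψ) :=
      by
        have := (Real.hasDerivAt_cos θ).comp_hasFDerivAt (θ, ψ)
          (hasFDerivAt_fst (𝕜 := ℝ) (E := ℝ) (F := ℝ) (p := (θ, ψ)))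
        exact this
    have hcos2 : HasFDerivAt (fun q : ℝ × ℝ => Real.cos (q.1 - Υ * q.2))
        (-Real.sin (θ - Υ * ψ) • Lu) (θ, ψ) :=
      (Real.hasDerivAt_cos _).comp_hasFDerivAt (θ, ψ) (hu (θ, ψ))
    have hru : HasFDerivAt (fun q : ℝ × ℝ => r (q.1 - Υ * q.2))
        (deriv r (θ - Υ * ψ) • Lu) (θ, ψ) :=
      ((hr _).hasDerivAt).comp_hasFDerivAt (θ, ψ) (hu (θ, ψ))
    have h : HasFDerivAt (fun q : ℝ × ℝ => M * s (q.1 - Υ * q.2) / (a - b * γ) *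
        (Real.cos q.1 - Real.cos (q.1 - Υ * q.2)) + r (q.1 - Υ * q.2)) _ (θ, ψ) :=
      (hA.mul (hcos1.sub hcos2)).add hru
    rw [h.fderiv]
    simp only [hLu, ContinuousLinearMap.add_apply, ContinuousLinearMap.smul_apply,
      ContinuousLinearMap.sub_apply, ContinuousLinearMap.coe_fst', ContinuousLinearMap.coe_snd', smul_eq_mul, Pi.sub_apply]
    have hid : (b - c * γ) * Υ = a - b * γ := by rw [hΥ]; field_simp
    clear_value Υ
    have hinv : (a - b * γ) * (a - b * γ)⁻¹ = 1 := mul_inv_cancel₀ habg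
    linear_combination
      (-(M * s (θ - Υ * ψ) * (a - b * γ)⁻¹ * Real.sin (θ - Υ * ψ) +
          (Real.cos θ - Real.cos (θ - Υ * ψ)) * (a - b * γ)⁻¹ * M * deriv s (θ - Υ * ψ) +
          deriv r (θ - Υ * ψ))) * hid -
      (M * s (θ - Υ * ψ) * Real.sin θ) * hinv
  · intro θ
    simp
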